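/- Let (Ω, 𝔽, ℙ) be a probability space and let S, X₁, X₂, Z : Ω → ℝ be (mutually) independent random variables in L², each with mean zero, with variances E[S²] = Q, E[X₁²] = γ·P₁, E[X₂²] = β·P₂, E[Z²] = σ², where P₁, P₂, Q, σ² > 0 and γ, β ∈ [0,1]. Set c = 1 + √(γ̄·P₁/Q) + √(β̄·P₂/Q) and Y = X₁ + X₂ + c·S + Z. Then min over a ∈ ℝ of E[(S − a·Y)²] equals D(γ,β) = Q·(σ² + γ·P₁ + β·P₂)/L(γ,β), and the minimum is attained at a* = (Q + √(γ̄·P₁·Q) + √(β̄·P₂·Q))/L(γ,β), where L(γ,β) = P₁ + P₂ + Q + σ² + 2·√(γ̄·P₁·Q) + 2·√(β̄·P₂·Q) + 2·√(γ̄·β̄·P₁·P₂). (This is the achievable-distortion computation for the two-user dirty paper MAC.) -/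

import Mathlib

set_option maxHeartbeats 1000000

open MeasureTheory ProbabilityTheory

noncomputable def Lfun (P1 P2 Q σ2 γ β : ℝ) : ℝ :=
  P1 + P2 + Q + σ2 + 2 * Real.sqrt ((1 - γ) * P1 * Q) + 2 * Real.sqrt ((1 - β) * P2 * Q)
    + 2 * Real.sqrt ((1 - γ) * (1 - β) * P1 * P2)

noncomputable def Dfun (P1 P2 Q σ2 γ β : ℝ) : ℝ :=
  Q * (σ2 + γ * P1 + β * P2) / Lfun P1 P2 Q σ2 γ β

theorem stmt_11 {Ω : Type*} [MeasurableSpace Ω] (μ : Measure Ω) [IsProbabilityMeasure μ]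
    (S X₁ X₂ Z : Ω → ℝ)
    (hindep : iIndepFun ![S, X₁, X₂, Z] μ)
    (hSL2 : MemLp S 2 μ) (hX₁L2 : MemLp X₁ 2 μ) (hX₂L2 : MemLp X₂ 2 μ)
    (hZL2 : MemLp Z 2 μ)
    (hSmean : ∫ ω, S ω ∂μ = 0) (hX₁mean : ∫ ω, X₁ ω ∂μ = 0)
    (hX₂mean : ∫ ω, X₂ ω ∂μ = 0) (hZmean : ∫ ω, Z ω ∂μ = 0)
    (P1 P2 Q σ2 γ β : ℝ) (hP1 : 0 < P1) (hP2 : 0 < P2) (hQ : 0 < Q) (hσ : 0 < σ2)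
    (hγ : γ ∈ Set.Icc (0:ℝ) 1) (hβ : β ∈ Set.Icc (0:ℝ) 1)
    (hSvar : ∫ ω, (S ω) ^ 2 ∂μ = Q) (hX₁var : ∫ ω, (X₁ ω) ^ 2 ∂μ = γ * P1)
    (hX₂var : ∫ ω, (X₂ ω) ^ 2 ∂μ = β * P2) (hZvar : ∫ ω, (Z ω) ^ 2 ∂μ = σ2)
    (c : ℝ) (hc : c = 1 + Real.sqrt ((1 - γ) * P1 / Q) + Real.sqrt ((1 - β) * P2 / Q))
    (Y : Ω → ℝ) (hY : Y = fun ω => X₁ ω + X₂ ω + c * S ω + Z ω)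
    (astar : ℝ)
    (hastar : astar = (Q + Real.sqrt ((1 - γ) * P1 * Q) + Real.sqrt ((1 - β) * P2 * Q))
        / Lfun P1 P2 Q σ2 γ β) :
    IsLeast {e : ℝ | ∃ a : ℝ, e = ∫ ω, (S ω - a * Y ω) ^ 2 ∂μ} (Dfun P1 P2 Q σ2 γ β) ∧
      ∫ ω, (S ω - astar * Y ω) ^ 2 ∂μ = Dfun P1 P2 Q σ2 γ β := by
  obtain ⟨hγ0, hγ1⟩ := hγ
  obtain ⟨hβ0, hβ1⟩ := hβ
  have h1γ : (0:ℝ) ≤ 1 - γ := by linarith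
  have h1β : (0:ℝ) ≤ 1 - β := by linarith
  set u := Real.sqrt ((1 - γ) * P1 / Q) with hu
  set v := Real.sqrt ((1 - β) * P2 / Q) with hv
  have hu0 : 0 ≤ u := Real.sqrt_nonneg _
  have hv0 : 0 ≤ v := Real.sqrt_nonneg _
  have hu2 : u ^ 2 = (1 - γ) * P1 / Q := Real.sq_sqrt (by positivity)
  have hv2 : v ^ 2 = (1 - β) * P2 / Q := Real.sq_sqrt (by positivity)
  have hu2' : u ^ 2 * Q = (1 - γ) * P1 := by rw [hu2]; field_simp
  have hv2' : v ^ 2 * Q = (1 - β) * P2 := by rw [hv2]; field_simp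
  have hs1 : Real.sqrt ((1 - γ) * P1 * Q) = u * Q := by
    rw [show (1 - γ) * P1 * Q = (u * Q) ^ 2 by linear_combination Q * hu2'.symm]
    exact Real.sqrt_sq (by positivity)
  have hs2 : Real.sqrt ((1 - β) * P2 * Q) = v * Q := by
    rw [show (1 - β) * P2 * Q = (v * Q) ^ 2 by linear_combination Q * hv2'.symm]
    exact Real.sqrt_sq (by positivity)
  have hs3 : Real.sqrt ((1 - γ) * (1 - β) * P1 * P2) = u * v * Q := by
    rw [show (1 - γ) * (1 - β) * P1 * P2 = (u * v * Q) ^ 2 by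
      linear_combination (-(v ^ 2 * Q)) * hu2' - ((1 - γ) * P1) * hv2']
    exact Real.sqrt_sq (by positivity)
  set K : ℝ := γ * P1 + β * P2 + σ2 with hK
  set Lv : ℝ := Lfun P1 P2 Q σ2 γ β with hLvdef
  have hLv : Lv = c ^ 2 * Q + K := by
    rw [hLvdef]
    simp only [Lfun]
    rw [hs1, hs2, hs3, hc, hK]
    linear_combination (-1 : ℝ) * hu2' - hv2'
  have hcQ : c * Q = Q + u * Q + v * Q := by rw [hc]; ring
  have hK0 : 0 < K := by
    have h1 := mul_nonneg hγ0 hP1.le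
    have h2 := mul_nonneg hβ0 hP2.le
    rw [hK]; linarith
  have hL0 : 0 < Lv := by
    have h1 : 0 ≤ c ^ 2 * Q := mul_nonneg (sq_nonneg c) hQ.le
    rw [hLv]; linarith
  -- probability part
  have hiS : Integrable S μ := hSL2.integrable one_le_two
  have hiX1 : Integrable X₁ μ := hX₁L2.integrable one_le_two
  have hiX2 : Integrable X₂ μ := hX₂L2.integrable one_le_two
  have hiZ : Integrable Z μ := hZL2.integrable one_le_two
  have hiSS : Integrable (fun ω => S ω ^ 2) μ := hSL2.integrable_sq
  have hiX1X1 : Integrable (fun ω => X₁ ω ^ 2) μ := hX₁L2.integrable_sq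
  have hiX2X2 : Integrable (fun ω => X₂ ω ^ 2) μ := hX₂L2.integrable_sq
  have hiZZ : Integrable (fun ω => Z ω ^ 2) μ := hZL2.integrable_sq
  have d01 : IndepFun S X₁ μ := by simpa using hindep.indepFun (show (0:Fin 4) ≠ 1 by decide)
  have d02 : IndepFun S X₂ μ := by simpa using hindep.indepFun (show (0:Fin 4) ≠ 2 by decide)
  have d03 : IndepFun S Z μ := by simpa using hindep.indepFun (show (0:Fin 4) ≠ 3 by decide)
  have d12 : IndepFun X₁ X₂ μ := by simpa using hindep.indepFun (show (1:Fin 4) ≠ 2 by decide)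
  have d13 : IndepFun X₁ Z μ := by simpa using hindep.indepFun (show (1:Fin 4) ≠ 3 by decide)
  have d23 : IndepFun X₂ Z μ := by simpa using hindep.indepFun (show (2:Fin 4) ≠ 3 by decide)
  have i01 : Integrable (fun ω => S ω * X₁ ω) μ := d01.integrable_mul hiS hiX1
  have i02 : Integrable (fun ω => S ω * X₂ ω) μ := d02.integrable_mul hiS hiX2
  have i03 : Integrable (fun ω => S ω * Z ω) μ := d03.integrable_mul hiS hiZ
  have i12 : Integrable (fun ω => X₁ ω * X₂ ω) μ := d12.integrable_mul hiX1 hiX2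
  have i13 : Integrable (fun ω => X₁ ω * Z ω) μ := d13.integrable_mul hiX1 hiZ
  have i23 : Integrable (fun ω => X₂ ω * Z ω) μ := d23.integrable_mul hiX2 hiZ
  have e01 : ∫ ω, S ω * X₁ ω ∂μ = 0 := by
    have := d01.integral_fun_mul_eq_mul_integral hiS.1 hiX1.1
    simpa [hSmean] using this
  have e02 : ∫ ω, S ω * X₂ ω ∂μ = 0 := by
    have := d02.integral_fun_mul_eq_mul_integral hiS.1 hiX2.1
    simpa [hSmean] using this
  have e03 : ∫ ω, S ω * Z ω ∂μ = 0 := by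
    have := d03.integral_fun_mul_eq_mul_integral hiS.1 hiZ.1
    simpa [hSmean] using this
  have e12 : ∫ ω, X₁ ω * X₂ ω ∂μ = 0 := by
    have := d12.integral_fun_mul_eq_mul_integral hiX1.1 hiX2.1
    simpa [hX₁mean] using this
  have e13 : ∫ ω, X₁ ω * Z ω ∂μ = 0 := by
    have := d13.integral_fun_mul_eq_mul_integral hiX1.1 hiZ.1
    simpa [hX₁mean] using this
  have e23 : ∫ ω, X₂ ω * Z ω ∂μ = 0 := by
    have := d23.integral_fun_mul_eq_mul_integral hiX2.1 hiZ.1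
    simpa [hX₂mean] using this
  have key : ∀ a : ℝ, ∫ ω, (S ω - a * Y ω) ^ 2 ∂μ
      = (1 - a * c) ^ 2 * Q + a ^ 2 * K := by
    intro a
    have expand : (fun ω => (S ω - a * Y ω) ^ 2)
        = fun ω => (1 - a * c) ^ 2 * S ω ^ 2 + a ^ 2 * X₁ ω ^ 2 + a ^ 2 * X₂ ω ^ 2
          + a ^ 2 * Z ω ^ 2
          + (-2 * a * (1 - a * c)) * (S ω * X₁ ω) + (-2 * a * (1 - a * c)) * (S ω * X₂ ω)
          + (-2 * a * (1 - a * c)) * (S ω * Z ω)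
          + (2 * a ^ 2) * (X₁ ω * X₂ ω) + (2 * a ^ 2) * (X₁ ω * Z ω)
          + (2 * a ^ 2) * (X₂ ω * Z ω) := by
      funext ω; rw [hY]; ring
    rw [expand]
    have I1 : Integrable (fun ω => (1 - a * c) ^ 2 * S ω ^ 2) μ := hiSS.const_mul _
    have I2 : Integrable (fun ω => a ^ 2 * X₁ ω ^ 2) μ := hiX1X1.const_mul _
    have I3 : Integrable (fun ω => a ^ 2 * X₂ ω ^ 2) μ := hiX2X2.const_mul _
    have I4 : Integrable (fun ω => a ^ 2 * Z ω ^ 2) μ := hiZZ.const_mul _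
    have I5 : Integrable (fun ω => (-2 * a * (1 - a * c)) * (S ω * X₁ ω)) μ := i01.const_mul _
    have I6 : Integrable (fun ω => (-2 * a * (1 - a * c)) * (S ω * X₂ ω)) μ := i02.const_mul _
    have I7 : Integrable (fun ω => (-2 * a * (1 - a * c)) * (S ω * Z ω)) μ := i03.const_mul _
    have I8 : Integrable (fun ω => (2 * a ^ 2) * (X₁ ω * X₂ ω)) μ := i12.const_mul _
    have I9 : Integrable (fun ω => (2 * a ^ 2) * (X₁ ω * Z ω)) μ := i13.const_mul _
    have I10 : Integrable (fun ω => (2 * a ^ 2) * (X₂ ω * Z ω)) μ := i23.const_mul _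
    have A2 : Integrable (fun ω => (1 - a * c) ^ 2 * S ω ^ 2 + a ^ 2 * X₁ ω ^ 2) μ := I1.add I2
    have A3 : Integrable (fun ω => (1 - a * c) ^ 2 * S ω ^ 2 + a ^ 2 * X₁ ω ^ 2
        + a ^ 2 * X₂ ω ^ 2) μ := A2.add I3
    have A4 : Integrable (fun ω => (1 - a * c) ^ 2 * S ω ^ 2 + a ^ 2 * X₁ ω ^ 2
        + a ^ 2 * X₂ ω ^ 2 + a ^ 2 * Z ω ^ 2) μ := A3.add I4
    have A5 : Integrable (fun ω => (1 - a * c) ^ 2 * S ω ^ 2 + a ^ 2 * X₁ ω ^ 2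
        + a ^ 2 * X₂ ω ^ 2 + a ^ 2 * Z ω ^ 2
        + (-2 * a * (1 - a * c)) * (S ω * X₁ ω)) μ := A4.add I5
    have A6 : Integrable (fun ω => (1 - a * c) ^ 2 * S ω ^ 2 + a ^ 2 * X₁ ω ^ 2
        + a ^ 2 * X₂ ω ^ 2 + a ^ 2 * Z ω ^ 2
        + (-2 * a * (1 - a * c)) * (S ω * X₁ ω)
        + (-2 * a * (1 - a * c)) * (S ω * X₂ ω)) μ := A5.add I6
    have A7 : Integrable (fun ω => (1 - a * c) ^ 2 * S ω ^ 2 + a ^ 2 * X₁ ω ^ 2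
        + a ^ 2 * X₂ ω ^ 2 + a ^ 2 * Z ω ^ 2
        + (-2 * a * (1 - a * c)) * (S ω * X₁ ω)
        + (-2 * a * (1 - a * c)) * (S ω * X₂ ω)
        + (-2 * a * (1 - a * c)) * (S ω * Z ω)) μ := A6.add I7
    have A8 : Integrable (fun ω => (1 - a * c) ^ 2 * S ω ^ 2 + a ^ 2 * X₁ ω ^ 2
        + a ^ 2 * X₂ ω ^ 2 + a ^ 2 * Z ω ^ 2
        + (-2 * a * (1 - a * c)) * (S ω * X₁ ω)
        + (-2 * a * (1 - a * c)) * (S ω * X₂ ω)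
        + (-2 * a * (1 - a * c)) * (S ω * Z ω)
        + (2 * a ^ 2) * (X₁ ω * X₂ ω)) μ := A7.add I8
    have A9 : Integrable (fun ω => (1 - a * c) ^ 2 * S ω ^ 2 + a ^ 2 * X₁ ω ^ 2
        + a ^ 2 * X₂ ω ^ 2 + a ^ 2 * Z ω ^ 2
        + (-2 * a * (1 - a * c)) * (S ω * X₁ ω)
        + (-2 * a * (1 - a * c)) * (S ω * X₂ ω)
        + (-2 * a * (1 - a * c)) * (S ω * Z ω)
        + (2 * a ^ 2) * (X₁ ω * X₂ ω)
        + (2 * a ^ 2) * (X₁ ω * Z ω)) μ := A8.add I9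
    rw [integral_add A9 I10, integral_add A8 I9, integral_add A7 I8, integral_add A6 I7,
        integral_add A5 I6, integral_add A4 I5, integral_add A3 I4, integral_add A2 I3,
        integral_add I1 I2, MeasureTheory.integral_const_mul _ _, MeasureTheory.integral_const_mul _ _, MeasureTheory.integral_const_mul _ _,
        MeasureTheory.integral_const_mul _ _, MeasureTheory.integral_const_mul _ _, MeasureTheory.integral_const_mul _ _, MeasureTheory.integral_const_mul _ _,
        MeasureTheory.integral_const_mul _ _, MeasureTheory.integral_const_mul _ _, MeasureTheory.integral_const_mul _ _,
        hSvar, hX₁var, hX₂var, hZvar, e01, e02, e03, e12, e13, e23]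
    rw [hK]; ring
  have hastar' : astar = c * Q / Lv := by
    rw [hastar, hs1, hs2, ← hcQ]
  have hDfun : Dfun P1 P2 Q σ2 γ β = Q * (σ2 + γ * P1 + β * P2) / Lv := rfl
  have hmain : ∫ ω, (S ω - astar * Y ω) ^ 2 ∂μ = Dfun P1 P2 Q σ2 γ β := by
    rw [key astar, hastar', hDfun]
    rw [hLv, hK]
    have hLne : c ^ 2 * Q + (γ * P1 + β * P2 + σ2) ≠ 0 := by
      rw [← hK, ← hLv]; exact hL0.ne'
    field_simp
    ring
  refine ⟨⟨⟨astar, hmain.symm⟩, ?_⟩, hmain⟩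
  rintro e ⟨a, rfl⟩
  rw [key a, hDfun, div_le_iff₀ hL0, hLv, hK]
  have hid : ((1 - a * c) ^ 2 * Q + a ^ 2 * (γ * P1 + β * P2 + σ2))
      * (c ^ 2 * Q + (γ * P1 + β * P2 + σ2))
      = Q * (σ2 + γ * P1 + β * P2)
        + ((c ^ 2 * Q + (γ * P1 + β * P2 + σ2)) * a - c * Q) ^ 2 := by ring
  have hsq := sq_nonneg ((c ^ 2 * Q + (γ * P1 + β * P2 + σ2)) * a - c * Q)
  linarith
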